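/- Consider the lexicographic instance with agents N = {1,2}, items M = {o1,o2,o3}, goods G_1 = G_2 = {o1,o2} and chores C_1 = C_2 = {o3}, and importance orders o1 ⊳_1 o2 ⊳_1 o3 and o3 ⊳_2 o1 ⊳_2 o2. The allocation A_1 = {o1}, A_2 = {o2,o3} is sequencible (it is produced by the picking sequence 1,2,2) but is not Pareto optimal (it is Pareto dominated by the allocation giving all three items to agent 1). Hence for mixed items sequencibility does not imply Pareto optimality, even for objective instances. -/

import Mathlib

attribute [local instance 10] Classical.propDecidable

/-- A lexicographic mixed instance: each agent `i` has a set `G i` of goods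
(its complement being the chores `C i`) and a strict linear importance order
`⊳_i` on the items, encoded as a linear order where larger means more important. -/
structure LexInstance (N M : Type) [Fintype N] [Fintype M] [DecidableEq M] where
  G : N → Finset M
  ord : N → LinearOrder M

namespace LexInstance

variable {N M : Type} [Fintype N] [Fintype M] [DecidableEq M]

/-- `inst.imp i a b` means `a ⊳_i b` : `a` is more important than `b` for agent `i`. -/
def imp (inst : LexInstance N M) (i : N) (a b : M) : Prop := (inst.ord i).lt b a

/-- The chores of agent `i`. -/
def C (inst : LexInstance N M) (i : N) : Finset M := (inst.G i)ᶜ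

/-- Strict lexicographic preference `X ≻_i Y`. -/
def SPref (inst : LexInstance N M) (i : N) (X Y : Finset M) : Prop :=
  (∃ g ∈ inst.G i ∩ (X \ Y), ∀ o ∈ Y ∩ inst.G i, inst.imp i o g → o ∈ X) ∨
  (∃ c ∈ inst.C i ∩ (Y \ X), ∀ o ∈ X ∩ inst.C i, inst.imp i o c → o ∈ Y)

/-- Weak lexicographic preference `X ⪰_i Y`. -/
def WPref (inst : LexInstance N M) (i : N) (X Y : Finset M) : Prop :=
  inst.SPref i X Y ∨ X = Y

/-- A (complete) allocation: pairwise disjoint bundles whose union is all of `M`. -/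
def IsAllocation (_inst : LexInstance N M) (A : N → Finset M) : Prop :=
  (∀ i j, i ≠ j → Disjoint (A i) (A j)) ∧ ∀ o : M, ∃ i, o ∈ A i

/-- Pareto optimality of a (complete) allocation. -/
def ParetoOptimal (inst : LexInstance N M) (A : N → Finset M) : Prop :=
  ¬ ∃ B : N → Finset M, inst.IsAllocation B ∧
      (∀ i, inst.WPref i (B i) (A i)) ∧ ∃ h, inst.SPref h (B h) (A h)

/-- The item agent `i` picks from the remaining set `R`: its `⊳_i`-greatest
remaining good if there is one, and otherwise the `⊳_i`-least remaining item. -/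
noncomputable def pickOne (inst : LexInstance N M) (i : N) (R : Finset M)
    (h : R.Nonempty) : M :=
  if hg : (R ∩ inst.G i).Nonempty then @Finset.max' M (inst.ord i) (R ∩ inst.G i) hg
  else @Finset.min' M (inst.ord i) R h

/-- Run the picking procedure along a sequence of agents, starting from the
remaining items `R`; returns the resulting bundles. -/
noncomputable def runPick (inst : LexInstance N M) : List N → Finset M → N → Finset M
  | [], _ => fun _ => ∅
  | i :: rest, R =>
    if h : R.Nonempty then
      fun j =>
        runPick inst rest (R.erase (inst.pickOne i R h)) j ∪
          (if j = i then {inst.pickOne i R h} else ∅)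
    else fun _ => ∅

/-- An allocation is sequencible if it is produced by some picking sequence of
length `|M|` starting from all items. -/
def Sequencible (inst : LexInstance N M) (A : N → Finset M) : Prop :=
  ∃ s : List N, s.length = Fintype.card M ∧ inst.runPick s Finset.univ = A

/-- A chores-only instance: every item is a chore for every agent. -/
def ChoresOnly (inst : LexInstance N M) : Prop := ∀ i, inst.G i = ∅

/-- Envy-freeness up to any item. -/
def EFX (inst : LexInstance N M) (A : N → Finset M) : Prop :=
  ∀ i h : N,
    (∀ o ∈ A h ∩ inst.G i, inst.WPref i (A i) ((A h).erase o)) ∧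
    (∀ o ∈ A i ∩ inst.C i, inst.WPref i ((A i).erase o) (A h))

/-- Envy-freeness up to any chore. -/
def EFXc (inst : LexInstance N M) (A : N → Finset M) : Prop :=
  ∀ i h : N, ∀ o ∈ A i ∩ inst.C i, inst.WPref i ((A i).erase o) (A h)

/-- Envy-freeness up to one item. -/
def EF1 (inst : LexInstance N M) (A : N → Finset M) : Prop :=
  ∀ i h : N, ((A i ∩ inst.C i) ∪ (A h ∩ inst.G i)).Nonempty →
    ∃ o ∈ (A i ∩ inst.C i) ∪ (A h ∩ inst.G i),
      inst.WPref i (A i) ((A h).erase o) ∨ inst.WPref i ((A i).erase o) (A h)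

/-- `A` gives every agent at least its maximin share: for every partition `P`
of the items into `n` bundles, agent `i` weakly prefers `A i` to some bundle of
`P` (hence to the `⪰_i`-least bundle of `P`). -/
def MMSfair (inst : LexInstance N M) (A : N → Finset M) : Prop :=
  ∀ i, ∀ P : N → Finset M, inst.IsAllocation P → ∃ j, inst.WPref i (A i) (P j)

/-- `B` is the maximin share `MMS_i` of agent `i`: `B` is the `⪰_i`-least bundle
of some partition of `M` into `n` bundles, and every such partition contains a
bundle to which `B` is weakly preferred. -/
def IsMMSBundle (inst : LexInstance N M) (i : N) (B : Finset M) : Prop :=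
  (∃ P : N → Finset M, inst.IsAllocation P ∧ (∃ j, P j = B) ∧
      ∀ j, inst.WPref i (P j) B) ∧
  (∀ P : N → Finset M, inst.IsAllocation P → ∃ j, inst.WPref i B (P j))

/-- The `k`-th (0-indexed) `⊳_i`-greatest good of agent `i`, if any. -/
noncomputable def kthGood (inst : LexInstance N M) (i : N) (k : ℕ) : Option M :=
  letI : LinearOrder M := inst.ord i
  (((inst.G i).sort (· ≤ ·)).reverse)[k]?

/-- The `k`-th (0-indexed) `⊳_i`-least chore of agent `i`, if any. -/
noncomputable def kthChore (inst : LexInstance N M) (i : N) (k : ℕ) : Option M :=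
  letI : LinearOrder M := inst.ord i
  ((inst.C i).sort  (· ≤ ·))[k]?

/-- Number of agents receiving their `k`-th (0-indexed) greatest good. -/
noncomputable def nPlus (inst : LexInstance N M) (A : N → Finset M) (k : ℕ) : ℕ :=
  (Finset.univ.filter fun i => (inst.kthGood i k).elim False (· ∈ A i)).card

/-- Number of agents receiving their `k`-th (0-indexed) least chore. -/
noncomputable def nMinus (inst : LexInstance N M) (A : N → Finset M) (k : ℕ) : ℕ :=
  (Finset.univ.filter fun i => (inst.kthChore i k).elim False (· ∈ A i)).card

/-- The rank signature `(n_1^+, …, n_m^+, n_1^-, …, n_m^-)` of an allocation. -/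
noncomputable def signature (inst : LexInstance N M) (A : N → Finset M) : List ℕ :=
  ((List.range (Fintype.card M)).map fun k => inst.nPlus A k) ++
    ((List.range (Fintype.card M)).map fun k => inst.nMinus A k)

/-- Rank-maximality: the signature is lexicographically maximal over allocations. -/
def RankMaximal (inst : LexInstance N M) (A : N → Finset M) : Prop :=
  inst.IsAllocation A ∧ ∀ B : N → Finset M, inst.IsAllocation B →
    ¬ List.Lex (· < ·) (inst.signature A) (inst.signature B)

end LexInstance

/-- The set of the `k` greatest (most important) elements of `S` under `L`. -/
def topK {M : Type} [DecidableEq M] (L : LinearOrder M) (S : Finset M) (k : ℕ) :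
    Finset M :=
  letI := L
  S.filter fun o => (S.filter fun o' => o < o').card < k

/-- Build a linear order on `Fin m` from an injective ranking function
(larger value = more important). -/
def mkOrd {m : ℕ} (f : Fin m → ℕ) (hf : Function.Injective f) : LinearOrder (Fin m) :=
  LinearOrder.lift' f hf

/-- The instance with two agents, goods `o1, o2` and chore `o3` (items are
`0, 1, 2` standing for `o1, o2, o3`), importance orders
`o1 ⊳₁ o2 ⊳₁ o3` and `o3 ⊳₂ o1 ⊳₂ o2`. -/
def inst2 : LexInstance (Fin 2) (Fin 3) where
  G := fun _ => {0, 1}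
  ord := ![mkOrd ![2, 1, 0] (by decide), mkOrd ![1, 0, 2] (by decide)]

/-- The allocation `A₁ = {o1}`, `A₂ = {o2, o3}`. -/
def alloc2 : Fin 2 → Finset (Fin 3) := ![{0}, {1, 2}]

/-- the allocation `A₁ = {o1}`, `A₂ = {o2,o3}` is produced by the
picking sequence `1,2,2`, hence sequencible, but is not Pareto optimal (it is
Pareto dominated by giving all items to agent 1).  So for mixed items
sequencibility does not imply Pareto optimality, even for objective instances. -/
lemma max'_eq {L : LinearOrder (Fin 3)} {S : Finset (Fin 3)} {h : S.Nonempty} {a : Fin 3}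
    (ha : a ∈ S) (hall : ∀ b ∈ S, L.le b a) : @Finset.max' _ L S h = a :=
  @le_antisymm _ L.toPartialOrder _ _ (@Finset.max'_le _ L _ _ _ hall)
    (@Finset.le_max' _ L _ _ ha)

lemma min'_eq {L : LinearOrder (Fin 3)} {S : Finset (Fin 3)} {h : S.Nonempty} {a : Fin 3}
    (ha : a ∈ S) (hall : ∀ b ∈ S, L.le a b) : @Finset.min' _ L S h = a :=
  @le_antisymm _ L.toPartialOrder _ _ (@Finset.min'_le _ L _ _ ha)
    (@Finset.le_min' _ L _ _ _ hall)

lemma pick1 (h : (Finset.univ : Finset (Fin 3)).Nonempty) :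
    inst2.pickOne 0 Finset.univ h = 0 := by
  rw [LexInstance.pickOne, dif_pos (show (Finset.univ ∩ inst2.G 0).Nonempty from
    ⟨0, by decide⟩)]
  refine max'_eq (by decide) ?_
  intro b hb
  fin_cases b
  · exact @of_decide_eq_true _ ((inst2.ord 0).toDecidableLE _ _) rfl
  · exact @of_decide_eq_true _ ((inst2.ord 0).toDecidableLE _ _) rfl
  · exact absurd hb (by decide)

lemma pick2 (h : ((Finset.univ : Finset (Fin 3)).erase 0).Nonempty) :
    inst2.pickOne 1 (Finset.univ.erase 0) h = 1 := by
  rw [LexInstance.pickOne, dif_pos (show ((Finset.univ.erase 0) ∩ inst2.G 1).Nonempty from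
    ⟨1, by decide⟩)]
  refine max'_eq (by decide) ?_
  intro b hb
  fin_cases b
  · exact absurd hb (by decide)
  · exact @of_decide_eq_true _ ((inst2.ord 1).toDecidableLE _ _) rfl
  · exact absurd hb (by decide)

lemma pick3 (h : (((Finset.univ : Finset (Fin 3)).erase 0).erase 1).Nonempty) :
    inst2.pickOne 1 ((Finset.univ.erase 0).erase 1) h = 2 := by
  rw [LexInstance.pickOne, dif_neg (show ¬(((Finset.univ.erase 0).erase 1) ∩ inst2.G 1).Nonempty by
    rw [show (((Finset.univ : Finset (Fin 3)).erase 0).erase 1) ∩ inst2.G 1 = ∅ from by decide]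
    simp)]
  refine min'_eq (by decide) ?_
  intro b hb
  fin_cases b
  · exact absurd hb (by decide)
  · exact absurd hb (by decide)
  · exact @of_decide_eq_true _ ((inst2.ord 1).toDecidableLE _ _) rfl

lemma runPick_eq : inst2.runPick [0, 1, 1] Finset.univ = alloc2 := by
  have h1 : (Finset.univ : Finset (Fin 3)).Nonempty := ⟨0, by decide⟩
  have h2 : ((Finset.univ : Finset (Fin 3)).erase 0).Nonempty := ⟨1, by decide⟩
  have h3 : (((Finset.univ : Finset (Fin 3)).erase 0).erase 1).Nonempty := ⟨2, by decide⟩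
  funext j
  rw [LexInstance.runPick, dif_pos h1]
  rw [pick1 h1]
  rw [LexInstance.runPick, dif_pos h2]
  rw [pick2 h2]
  rw [LexInstance.runPick, dif_pos h3]
  rw [pick3 h3]
  rw [LexInstance.runPick]
  fin_cases j <;> split_ifs <;> first | decide | simp_all

theorem sequencible_not_po :
    inst2.runPick [0, 1, 1] Finset.univ = alloc2 ∧
    inst2.Sequencible alloc2 ∧
    (inst2.IsAllocation ![Finset.univ, ∅] ∧
      (∀ i, inst2.WPref i (![(Finset.univ : Finset (Fin 3)), ∅] i) (alloc2 i)) ∧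
      inst2.SPref 0 Finset.univ (alloc2 0)) ∧
    ¬ inst2.ParetoOptimal alloc2 := by
  have hs0 : inst2.SPref 0 Finset.univ (alloc2 0) := by
    left
    refine ⟨1, by decide, ?_⟩
    intro o _ _
    exact Finset.mem_univ o
  have hs1 : inst2.SPref 1 ∅ (alloc2 1) := by
    right
    refine ⟨2, by decide, ?_⟩
    intro o ho
    rw [Finset.empty_inter] at ho
    exact absurd ho (Finset.notMem_empty o)
  have halloc : inst2.IsAllocation ![Finset.univ, ∅] := by
    constructor
    · intro i j hij
      fin_cases i <;> fin_cases j <;> first | exact absurd rfl hij | simp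
    · intro o; exact ⟨0, Finset.mem_univ o⟩
  have hw : ∀ i, inst2.WPref i (![(Finset.univ : Finset (Fin 3)), ∅] i) (alloc2 i) := by
    intro i
    fin_cases i
    · exact Or.inl hs0
    · exact Or.inl hs1
  refine ⟨runPick_eq, ⟨[0,1,1], by decide, runPick_eq⟩, ⟨halloc, hw, hs0⟩, ?_⟩
  intro hpo
  exact hpo ⟨![Finset.univ, ∅], halloc, hw, 0, hs0⟩
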